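/- Let A be a finite-length abelian category, S a totally ordered set indexing the simple objects, and s ∈ S. If φ: M → L_s and φ': M' → L_s are both standard covers of the simple object L_s (i.e., each is a surjection whose kernel has all simple subquotients of the form L_t with t < s, and which satisfies Hom(M, L_t) = Ext^1(M, L_t) = 0 for all t < s), then there is a unique isomorphism θ: M → M' with φ' ∘ θ = φ. -/

import Mathlib

open CategoryTheory CategoryTheory.Limits

universe w v u

/-- `T` is a subquotient of `Y`: there is an object `Z`, a monomorphism `Z ⟶ Y`
and an epimorphism `Z ⟶ T`. -/
def IsSubquotient {A : Type u} [Category.{v} A] [Abelian A] (T Y : A) : Prop :=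
  ∃ (Z : A) (i : Z ⟶ Y) (p : Z ⟶ T), Mono i ∧ Epi p

/-- An object has finite length if its subobject lattice is both artinian and noetherian. -/
def HasFiniteLength {A : Type u} [Category.{v} A] [Abelian A] (X : A) : Prop :=
  WellFoundedGT (Subobject X) ∧ WellFoundedLT (Subobject X)

/-- `φ : M ⟶ L s` is a standard cover of the simple object `L s`: it is an epimorphism,
every simple subquotient of its kernel is isomorphic to some `L t` with `t < s`, and
`Hom(M, L t) = Ext¹(M, L t) = 0` for all `t < s`. -/
def IsStandardCover {A : Type u} [Category.{v} A] [Abelian A] [HasExt.{w} A]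
    {S : Type*} [LinearOrder S] (L : S → A) (s : S) (M : A) (φ : M ⟶ L s) : Prop :=
  Epi φ ∧
  (∀ T : A, Simple T → IsSubquotient T (kernel φ) →
    ∃ t, t < s ∧ Nonempty (T ≅ L t)) ∧
  (∀ t, t < s → (∀ f : M ⟶ L t, f = 0) ∧ Subsingleton (Abelian.Ext M (L t) 1))

section Auxiliary

open CategoryTheory.Abelian

variable {A : Type u} [Category.{v} A] [Abelian A]

/-- Auxiliary vanishing predicate: all morphisms `M ⟶ X` vanish and `Ext¹(M, X) = 0`. -/
def ExtVanish [HasExt.{w} A] (M X : A) : Prop :=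
  (∀ f : M ⟶ X, f = 0) ∧ (∀ e : Abelian.Ext M X 1, e = 0)

lemma extVanish_of_isZero [HasExt.{w} A] (M : A) {X : A} (h : IsZero X) :
    ExtVanish.{w} M X := by
  constructor
  · intro f; exact h.eq_zero_of_tgt f
  · intro e
    have hid : (𝟙 X) = 0 := h.eq_zero_of_tgt _
    have h2 : e = e.comp (Ext.mk₀ (𝟙 X)) (add_zero 1) := (Ext.comp_mk₀_id e).symm
    rw [h2, hid, Ext.mk₀_zero, Ext.comp_zero]

lemma extVanish_of_iso [HasExt.{w} A] (M : A) {X Y : A} (e : X ≅ Y)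
    (h : ExtVanish.{w} M X) : ExtVanish.{w} M Y := by
  constructor
  · intro f
    have h1 : f ≫ e.inv = 0 := h.1 _
    have h2 : f = (f ≫ e.inv) ≫ e.hom := by simp
    rw [h2, h1, Limits.zero_comp]
  · intro x
    have h1 : x.comp (Ext.mk₀ e.inv) (add_zero 1) = 0 := h.2 _
    have h2 : x = (x.comp (Ext.mk₀ e.inv) (add_zero 1)).comp (Ext.mk₀ e.hom) (add_zero 1) := by
      rw [Ext.comp_assoc_of_third_deg_zero, Ext.mk₀_comp_mk₀, e.inv_hom_id, Ext.comp_mk₀_id]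
    rw [h2, h1, Ext.zero_comp]

lemma extVanish_of_shortExact [HasExt.{w} A] (M : A) {S : ShortComplex A}
    (hS : S.ShortExact) (h₁ : ExtVanish.{w} M S.X₁) (h₃ : ExtVanish.{w} M S.X₃) :
    ExtVanish.{w} M S.X₂ := by
  constructor
  · intro f
    have hf : f ≫ S.g = 0 := h₃.1 _
    haveI := hS.mono_f
    obtain ⟨l, hl⟩ := KernelFork.IsLimit.lift' hS.exact.fIsKernel f hf
    simp only [Fork.ι_ofι] at hl
    rw [← hl, h₁.1 l, Limits.zero_comp]
  · intro x
    have hx : x.comp (Ext.mk₀ S.g) (add_zero 1) = 0 := h₃.2 _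
    obtain ⟨x₁, hx₁⟩ := Ext.covariant_sequence_exact₂ M hS x hx
    rw [← hx₁, h₁.2 x₁, Ext.zero_comp]

/-- The quotient of a subobject by a coatom of its subobject lattice is simple. -/
lemma simple_cokernel_of_isCoatom {Y : A} {P : Subobject Y} (hP : IsCoatom P) :
    Simple (cokernel P.arrow) := by
  apply simple_of_cosimple
  intro Z f hepi
  constructor
  · intro hiso hf0
    have hzero : IsZero (cokernel P.arrow) := by
      rw [IsZero.iff_id_eq_zero]
      obtain ⟨g, hfg, hgf⟩ := hiso.out
      rw [← hfg, hf0, Limits.zero_comp]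
    have hπ : cokernel.π P.arrow = 0 := hzero.eq_zero_of_tgt _
    haveI : Epi P.arrow := Preadditive.epi_of_cokernel_zero hπ
    haveI : IsIso P.arrow := isIso_of_mono_of_epi _
    exact hP.1 (Subobject.eq_top_of_isIso_arrow P)
  · intro hf
    haveI : Epi (cokernel.π P.arrow ≫ f) := epi_comp _ _
    have hg0 : P.arrow ≫ cokernel.π P.arrow ≫ f = 0 := by
      rw [← Category.assoc, cokernel.condition, Limits.zero_comp]
    have hPle : P ≤ kernelSubobject (cokernel.π P.arrow ≫ f) :=
      Subobject.le_of_comm (factorThruKernelSubobject _ P.arrow hg0) (by simp)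
    have hkne : kernelSubobject (cokernel.π P.arrow ≫ f) ≠ ⊤ := by
      intro htop
      haveI : IsIso (kernelSubobject (cokernel.π P.arrow ≫ f)).arrow :=
        (Subobject.isIso_arrow_iff_eq_top _).mpr htop
      have hgz : cokernel.π P.arrow ≫ f = 0 :=
        zero_of_epi_comp (kernelSubobject (cokernel.π P.arrow ≫ f)).arrow
          (kernelSubobject_arrow_comp _)
      exact hf (zero_of_epi_comp (cokernel.π P.arrow) hgz)
    have hker : kernelSubobject (cokernel.π P.arrow ≫ f) = P := by
      rcases lt_or_eq_of_le hPle with hlt | heq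
      · exact absurd (hP.2 _ hlt) hkne
      · exact heq.symm
    haveI : Mono f := by
      apply Preadditive.mono_of_cancel_zero
      intro W v hv
      have hw : pullback.snd v (cokernel.π P.arrow) ≫ cokernel.π P.arrow ≫ f = 0 := by
        rw [← Category.assoc, ← pullback.condition, Category.assoc, hv, Limits.comp_zero]
      have hwπ : pullback.snd v (cokernel.π P.arrow) ≫ cokernel.π P.arrow = 0 := by
        rw [← factorThruKernelSubobject_comp_arrow _ _ hw, Category.assoc]
        have harr : (kernelSubobject (cokernel.π P.arrow ≫ f)).arrow ≫ cokernel.π P.arrow = 0 := by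
          rw [hker]; exact cokernel.condition _
        rw [harr, Limits.comp_zero]
      have hvz : pullback.fst v (cokernel.π P.arrow) ≫ v = 0 := by
        rw [pullback.condition, hwπ]
      exact zero_of_epi_comp (pullback.fst v (cokernel.π P.arrow)) hvz
    exact isIso_of_mono_of_epi f

/-- Key induction: if every simple subquotient `T` of `X` satisfies `ExtVanish M T`,
then `ExtVanish M X`. -/
lemma extVanish_of_simple_subquotients [HasExt.{w} A]
    (hfl : ∀ X : A, HasFiniteLength X) (M X : A)
    (hX : ∀ T : A, Simple T → IsSubquotient T X → ExtVanish.{w} M T) :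
    ExtVanish.{w} M X := by
  have main : ∀ N : Subobject X, ExtVanish.{w} M ((N : A)) := by
    intro N
    refine WellFounded.induction (C := fun N : Subobject X => ExtVanish.{w} M ((N : A)))
      (hfl X).2.wf N ?_
    clear N
    intro N ih
    by_cases hz : IsZero ((N : A))
    · exact extVanish_of_isZero M hz
    · haveI : Nontrivial (Subobject ((N : A))) := Subobject.nontrivial_of_not_isZero hz
      obtain ⟨P, hPne, hPmax⟩ := (hfl ((N : A))).1.wf.has_min
        {P : Subobject ((N : A)) | P ≠ ⊤} ⟨⊥, bot_ne_top⟩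
      have hcoatom : IsCoatom P := ⟨hPne, fun Q hQ => by
        by_contra hQne
        exact hPmax Q hQne hQ⟩
      haveI : Mono (P.arrow ≫ N.arrow) := mono_comp _ _
      set N' : Subobject X := Subobject.mk (P.arrow ≫ N.arrow) with hN'
      have hle : N' ≤ N :=
        Subobject.le_of_comm ((Subobject.underlyingIso (P.arrow ≫ N.arrow)).hom ≫ P.arrow)
          (by rw [Category.assoc, Subobject.underlyingIso_hom_comp_eq_mk])
      have hlt : N' < N := by
        rcases lt_or_eq_of_le hle with hcase | hcase
        · exact hcase
        · exfalso
          have hwiso : IsIso (Subobject.ofLE N' N hle) := by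
            refine ⟨Subobject.ofLE N N' hcase.ge, ?_, ?_⟩
            · rw [Subobject.ofLE_comp_ofLE, Subobject.ofLE_refl]
            · rw [Subobject.ofLE_comp_ofLE, Subobject.ofLE_refl]
          have hu : (Subobject.underlyingIso (P.arrow ≫ N.arrow)).hom ≫ P.arrow =
              Subobject.ofLE N' N hle := by
            rw [← cancel_mono N.arrow, Category.assoc, Subobject.underlyingIso_hom_comp_eq_mk,
              Subobject.ofLE_arrow]
          have hiso : IsIso P.arrow := by
            have : P.arrow = (Subobject.underlyingIso (P.arrow ≫ N.arrow)).inv ≫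
                ((Subobject.underlyingIso (P.arrow ≫ N.arrow)).hom ≫ P.arrow) := by simp
            rw [this, hu]
            infer_instance
          exact hPne (Subobject.eq_top_of_isIso_arrow P)
      have hses : (ShortComplex.mk P.arrow (cokernel.π P.arrow)
          (cokernel.condition _)).ShortExact :=
        { exact := ShortComplex.exact_of_g_is_cokernel _ (cokernelIsCokernel _) }
      have hQ : ExtVanish.{w} M (cokernel P.arrow) :=
        hX _ (simple_cokernel_of_isCoatom hcoatom)
          ⟨(N : A), N.arrow, cokernel.π P.arrow, inferInstance, inferInstance⟩
      have hP : ExtVanish.{w} M ((P : A)) :=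
        extVanish_of_iso M (Subobject.underlyingIso (P.arrow ≫ N.arrow)) (ih N' hlt)
      exact extVanish_of_shortExact M hses hP hQ
  exact extVanish_of_iso M (asIso (⊤ : Subobject X).arrow) (main ⊤)

/-- If `Ext¹(S.X₃, S.X₁) = 0` for a short exact sequence `S`, then `S.g` has a section. -/
lemma exists_section_of_extVanish [HasExt.{w} A] {S : ShortComplex A} (hS : S.ShortExact)
    (hext : ∀ e : Abelian.Ext S.X₃ S.X₁ 1, e = 0) :
    ∃ σ : S.X₃ ⟶ S.X₂, σ ≫ S.g = 𝟙 S.X₃ := by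
  obtain ⟨x₂, hx₂⟩ := Ext.covariant_sequence_exact₃ S.X₃ hS (Ext.mk₀ (𝟙 S.X₃)) rfl (hext _)
  letI := HasDerivedCategory.standard A
  have hhom : (x₂.comp (Ext.mk₀ S.g) (add_zero 0)).hom = (Ext.mk₀ (𝟙 S.X₃)).hom := by rw [hx₂]
  rw [Ext.comp_hom, Ext.mk₀_hom, Ext.mk₀_hom, ShiftedHom.comp_mk₀] at hhom
  have hnat := (shiftFunctorZero' (DerivedCategory A) ((0 : ℕ) : ℤ)
    Nat.cast_zero).hom.naturality ((DerivedCategory.singleFunctor A 0).map S.g)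
  simp only [Functor.id_map] at hnat
  have husec : (x₂.hom ≫ (shiftFunctorZero' (DerivedCategory A) ((0 : ℕ) : ℤ)
        Nat.cast_zero).hom.app ((DerivedCategory.singleFunctor A 0).obj S.X₂)) ≫
      (DerivedCategory.singleFunctor A 0).map S.g =
      𝟙 ((DerivedCategory.singleFunctor A 0).obj S.X₃) := by
    rw [Category.assoc, ← hnat, ← Category.assoc, hhom]
    simp [ShiftedHom.mk₀]
  have η : DerivedCategory.singleFunctor A 0 ⋙ DerivedCategory.homologyFunctor A 0 ≅ 𝟭 A :=
    Functor.isoWhiskerRight ((SingleFunctors.evaluation A (DerivedCategory A) (0 : ℤ)).mapIso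
        (DerivedCategory.singleFunctorsPostcompQIso A)) (DerivedCategory.homologyFunctor A 0) ≪≫
      Functor.associator _ _ _ ≪≫
      Functor.isoWhiskerLeft (CochainComplex.singleFunctor A 0)
        (DerivedCategory.homologyFunctorFactors A 0) ≪≫
      HomologicalComplex.homologyFunctorSingleIso A (ComplexShape.up ℤ) 0
  refine ⟨η.inv.app S.X₃ ≫ (DerivedCategory.homologyFunctor A 0).map
    (x₂.hom ≫ (shiftFunctorZero' (DerivedCategory A) ((0 : ℕ) : ℤ)
      Nat.cast_zero).hom.app ((DerivedCategory.singleFunctor A 0).obj S.X₂)) ≫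
    η.hom.app S.X₂, ?_⟩
  have hnatη := η.hom.naturality S.g
  simp only [Functor.comp_map, Functor.id_map] at hnatη
  rw [Category.assoc, Category.assoc, ← hnatη, ← Category.assoc
    ((DerivedCategory.homologyFunctor A 0).map _), ← CategoryTheory.Functor.map_comp, husec,
    CategoryTheory.Functor.map_id, Category.id_comp, Iso.inv_hom_id_app]
  rfl

/-- Lifting along an epimorphism onto a common target. -/
lemma exists_lift_standard [HasExt.{w} A] (hfl : ∀ X : A, HasFiniteLength X)
    {M₁ M₂ Ls : A} (φ₁ : M₁ ⟶ Ls) (φ₂ : M₂ ⟶ Ls) [Epi φ₂]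
    (hsub : ∀ T : A, Simple T → IsSubquotient T (kernel φ₂) → ExtVanish.{w} M₁ T) :
    ∃ θ : M₁ ⟶ M₂, θ ≫ φ₂ = φ₁ := by
  have hu0 : (kernel.ι (pullback.fst φ₁ φ₂) ≫ pullback.snd φ₁ φ₂) ≫ φ₂ = 0 := by
    rw [Category.assoc, ← pullback.condition, ← Category.assoc, kernel.condition,
      Limits.zero_comp]
  have hcomp : Mono (kernel.lift φ₂ _ hu0 ≫ kernel.ι φ₂) := by
    rw [kernel.lift_ι]
    apply Preadditive.mono_of_cancel_zero
    intro W v hv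
    have h1 : (v ≫ kernel.ι (pullback.fst φ₁ φ₂)) ≫ pullback.fst φ₁ φ₂ = 0 := by
      rw [Category.assoc, kernel.condition, Limits.comp_zero]
    have h2 : (v ≫ kernel.ι (pullback.fst φ₁ φ₂)) ≫ pullback.snd φ₁ φ₂ = 0 := by
      rw [Category.assoc]; exact hv
    have h3 : v ≫ kernel.ι (pullback.fst φ₁ φ₂) = 0 := by
      apply pullback.hom_ext
      · rw [h1, Limits.zero_comp]
      · rw [h2, Limits.zero_comp]
    exact zero_of_comp_mono (kernel.ι (pullback.fst φ₁ φ₂)) h3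
  haveI := hcomp
  haveI hmonu : Mono (kernel.lift φ₂ _ hu0) := mono_of_mono _ (kernel.ι φ₂)
  have hvan : ExtVanish.{w} M₁ (kernel (pullback.fst φ₁ φ₂)) := by
    apply extVanish_of_simple_subquotients hfl
    intro T hT hsq
    obtain ⟨Z, i, pr, hi, hpr⟩ := hsq
    haveI := hi
    exact hsub T hT ⟨Z, i ≫ kernel.lift φ₂ _ hu0, pr, mono_comp _ _, hpr⟩
  have hses : (ShortComplex.mk (kernel.ι (pullback.fst φ₁ φ₂)) (pullback.fst φ₁ φ₂)
      (kernel.condition _)).ShortExact :=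
    { exact := ShortComplex.exact_of_f_is_kernel _ (kernelIsKernel _) }
  obtain ⟨σ, hσ⟩ := exists_section_of_extVanish hses hvan.2
  refine ⟨σ ≫ pullback.snd φ₁ φ₂, ?_⟩
  rw [Category.assoc, ← pullback.condition, ← Category.assoc,
    show σ ≫ pullback.fst φ₁ φ₂ = 𝟙 M₁ from hσ, Category.id_comp]

end Auxiliary

/-- any two standard covers of the simple object `L s` are related by a
unique isomorphism compatible with the covering maps. -/
theorem standardCover_unique
    {A : Type u} [Category.{v} A] [Abelian A] [HasExt.{w} A]
    (hfl : ∀ X : A, HasFiniteLength X)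
    {S : Type*} [LinearOrder S] (L : S → A) (hL : ∀ t, Simple (L t))
    (s : S) (M M' : A) (φ : M ⟶ L s) (φ' : M' ⟶ L s)
    (h : IsStandardCover L s M φ) (h' : IsStandardCover L s M' φ') :
    ∃! θ : M ≅ M', θ.hom ≫ φ' = φ := by
  obtain ⟨hepi, hker, hvan⟩ := h
  obtain ⟨hepi', hker', hvan'⟩ := h'
  haveI := hepi
  haveI := hepi'
  have vanL : ∀ M₀ : A,
      (∀ t, t < s → (∀ f : M₀ ⟶ L t, f = 0) ∧ Subsingleton (Abelian.Ext M₀ (L t) 1)) →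
      ∀ T : A, Simple T → (∃ t, t < s ∧ Nonempty (T ≅ L t)) → ExtVanish.{w} M₀ T := by
    intro M₀ hM₀ T _ hex
    obtain ⟨t, ht, ⟨e⟩⟩ := hex
    refine extVanish_of_iso M₀ e.symm ⟨(hM₀ t ht).1, fun x => ?_⟩
    haveI := (hM₀ t ht).2
    exact Subsingleton.elim x 0
  have uniq : ∀ {M₁ M₂ : A} (φ₁ : M₁ ⟶ L s) (φ₂ : M₂ ⟶ L s),
      (∀ f : M₁ ⟶ kernel φ₂, f = 0) →
      ∀ θ₁ θ₂ : M₁ ⟶ M₂, θ₁ ≫ φ₂ = φ₁ → θ₂ ≫ φ₂ = φ₁ → θ₁ = θ₂ := by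
    intro M₁ M₂ φ₁ φ₂ hv θ₁ θ₂ h₁ h₂
    have hd : (θ₁ - θ₂) ≫ φ₂ = 0 := by rw [Preadditive.sub_comp, h₁, h₂, sub_self]
    have hfac : θ₁ - θ₂ = kernel.lift φ₂ (θ₁ - θ₂) hd ≫ kernel.ι φ₂ := (kernel.lift_ι _ _ _).symm
    rw [hv (kernel.lift φ₂ (θ₁ - θ₂) hd), Limits.zero_comp] at hfac
    exact sub_eq_zero.mp hfac
  obtain ⟨θh, hθh⟩ := exists_lift_standard hfl φ φ'
    (fun T hT hsq => vanL M hvan T hT (hker' T hT hsq))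
  obtain ⟨θi, hθi⟩ := exists_lift_standard hfl φ' φ
    (fun T hT hsq => vanL M' hvan' T hT (hker T hT hsq))
  have vMK' : ExtVanish.{w} M (kernel φ') :=
    extVanish_of_simple_subquotients hfl M (kernel φ')
      (fun T hT hsq => vanL M hvan T hT (hker' T hT hsq))
  have vMK : ExtVanish.{w} M (kernel φ) :=
    extVanish_of_simple_subquotients hfl M (kernel φ)
      (fun T hT hsq => vanL M hvan T hT (hker T hT hsq))
  have vM'K' : ExtVanish.{w} M' (kernel φ') :=
    extVanish_of_simple_subquotients hfl M' (kernel φ')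
      (fun T hT hsq => vanL M' hvan' T hT (hker' T hT hsq))
  have hhi : θh ≫ θi = 𝟙 M := by
    apply uniq φ φ vMK.1
    · rw [Category.assoc, hθi, hθh]
    · rw [Category.id_comp]
  have hih : θi ≫ θh = 𝟙 M' := by
    apply uniq φ' φ' vM'K'.1
    · rw [Category.assoc, hθh, hθi]
    · rw [Category.id_comp]
  refine ⟨⟨θh, θi, hhi, hih⟩, hθh, ?_⟩
  intro ψ hψ
  apply Iso.ext
  exact uniq φ φ' vMK'.1 ψ.hom θh hψ hθh
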